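/- Let (X,μ) be a measure space with μ(X) < ∞ and let p, q be bounded variable exponents on X (measurable functions with positive essential infimum and finite essential supremum) satisfying ess inf (q − p) > 0. Then L^{q(·)}(X,μ) ⊆ L^{p(·)}(X,μ), and for every u ∈ L^{q(·)}(X,μ), ‖u‖_{L^{p(·)}} ≤ 2^{1/p^-} · max{‖1‖_{L^{t'(·)}}^{1/p^+}, ‖1‖_{L^{t'(·)}}^{1/p^-}} · ‖u‖_{L^{q(·)}}, where t := q/p and t' is the conjugate exponent of t (1/t + 1/t' = 1). -/

import Mathlib

open MeasureTheory Metric ENNReal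

noncomputable section

/-- The semi-modular `∫ f(x)^{p(x)} dμ` of an `ℝ≥0∞`-valued function. -/
def modE {X : Type*} [MeasurableSpace X] (μ : Measure X) (p : X → ℝ) (f : X → ℝ≥0∞) : ℝ≥0∞ :=
  ∫⁻ x, f x ^ p x ∂μ

/-- The Luxemburg quasi-norm associated to the variable exponent `p`. -/
def luxE {X : Type*} [MeasurableSpace X] (μ : Measure X) (p : X → ℝ) (f : X → ℝ≥0∞) : ℝ≥0∞ :=
  sInf {l : ℝ≥0∞ | 0 < l ∧ l ≠ ⊤ ∧ modE μ p (fun x => f x / l) ≤ 1}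

/-- The Luxemburg quasi-norm of a real-valued function. -/
def luxR {X : Type*} [MeasurableSpace X] (μ : Measure X) (p : X → ℝ) (u : X → ℝ) : ℝ≥0∞ :=
  luxE μ p (fun x => (‖u x‖₊ : ℝ≥0∞))

/-- `g` is a scalar `s(·)`-gradient of `u` on the set `E`. -/
def IsSGradOn {X : Type*} [MeasurableSpace X] [PseudoMetricSpace X] (μ : Measure X)
    (E : Set X) (s : X → ℝ) (u : X → ℝ) (g : X → ℝ≥0∞) : Prop :=
  Measurable g ∧ ∃ N : Set X, N ⊆ E ∧ μ N = 0 ∧ ∀ x ∈ E \ N, ∀ y ∈ E \ N,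
    ENNReal.ofReal |u x - u y| ≤
      ENNReal.ofReal (dist x y ^ s x) * g x + ENNReal.ofReal (dist x y ^ s y) * g y

/-- `{g k}` is a vector (fractional) `s(·)`-gradient of `u` on the set `E`. -/
def IsVGradOn {X : Type*} [MeasurableSpace X] [PseudoMetricSpace X] (μ : Measure X)
    (E : Set X) (s : X → ℝ) (u : X → ℝ) (g : ℤ → X → ℝ≥0∞) : Prop :=
  (∀ k, Measurable (g k)) ∧ ∃ N : Set X, N ⊆ E ∧ μ N = 0 ∧
    ∀ x ∈ E \ N, ∀ y ∈ E \ N, ∀ k : ℤ,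
      (2 : ℝ) ^ (-(k : ℝ) - 1) ≤ dist x y → dist x y < (2 : ℝ) ^ (-(k : ℝ)) →
      ENNReal.ofReal |u x - u y| ≤
        ENNReal.ofReal (dist x y ^ s x) * g k x + ENNReal.ofReal (dist x y ^ s y) * g k y

/-- Pointwise `ℓ^{q}`-norm of a sequence, `q ∈ (0,∞]`. -/
def seqNormE (q : ℝ≥0∞) (v : ℤ → ℝ≥0∞) : ℝ≥0∞ :=
  if q = ⊤ then ⨆ k, v k else (∑' k, v k ^ q.toReal) ^ (1 / q.toReal)

/-- The mixed `L^{p(·)}(ℓ^{q(·)})` quasi-norm. -/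
def LpEllNorm {X : Type*} [MeasurableSpace X] (μ : Measure X) (p : X → ℝ) (q : X → ℝ≥0∞)
    (g : ℤ → X → ℝ≥0∞) : ℝ≥0∞ :=
  luxE μ p (fun x => seqNormE (q x) (fun k => g k x))

/-- The semi-modular of the mixed `ℓ^{q(·)}(L^{p(·)})` space. -/
def ellLpMod {X : Type*} [MeasurableSpace X] (μ : Measure X) (p : X → ℝ) (q : X → ℝ≥0∞)
    (g : ℤ → X → ℝ≥0∞) : ℝ≥0∞ :=
  ∑' k : ℤ, sInf {l : ℝ≥0∞ | 0 < l ∧ l ≠ ⊤ ∧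
    modE μ p (fun x => g k x / l ^ (1 / q x).toReal) ≤ 1}

/-- The mixed `ℓ^{q(·)}(L^{p(·)})` quasi-norm. -/
def ellLpNorm {X : Type*} [MeasurableSpace X] (μ : Measure X) (p : X → ℝ) (q : X → ℝ≥0∞)
    (g : ℤ → X → ℝ≥0∞) : ℝ≥0∞ :=
  sInf {l : ℝ≥0∞ | 0 < l ∧ l ≠ ⊤ ∧ ellLpMod μ p q (fun k x => g k x / l) ≤ 1}

/-- Quasi-seminorm of the homogeneous variable Hajłasz–Sobolev space `Ṁ^{s(·),p(·)}(E)`. -/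
def MNormOn {X : Type*} [MeasurableSpace X] [PseudoMetricSpace X] (μ : Measure X)
    (E : Set X) (p s : X → ℝ) (u : X → ℝ) : ℝ≥0∞ :=
  sInf ((fun g => luxE (μ.restrict E) p g) '' {g | IsSGradOn μ E s u g})

/-- Quasi-seminorm of the homogeneous Hajłasz–Triebel–Lizorkin space `Ṁ^{s(·)}_{p(·),q(·)}(E)`. -/
def TLNormOn {X : Type*} [MeasurableSpace X] [PseudoMetricSpace X] (μ : Measure X)
    (E : Set X) (p : X → ℝ) (q : X → ℝ≥0∞) (s : X → ℝ) (u : X → ℝ) : ℝ≥0∞ :=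
  sInf ((fun g => LpEllNorm (μ.restrict E) p q g) '' {g | IsVGradOn μ E s u g})

/-- Quasi-seminorm of the homogeneous Hajłasz–Besov space `Ṅ^{s(·)}_{p(·),q(·)}(E)`. -/
def BNormOn {X : Type*} [MeasurableSpace X] [PseudoMetricSpace X] (μ : Measure X)
    (E : Set X) (p : X → ℝ) (q : X → ℝ≥0∞) (s : X → ℝ) (u : X → ℝ) : ℝ≥0∞ :=
  sInf ((fun g => ellLpNorm (μ.restrict E) p q g) '' {g | IsVGradOn μ E s u g})


private lemma ae_essInf_le_of_pos {X : Type*} [MeasurableSpace X] {μ : Measure X}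
    {f : X → ℝ} (h : 0 < essInf f μ) : ∀ᵐ x ∂μ, essInf f μ ≤ f x := by
  have hne : {a : ℝ | ∀ᵐ x ∂μ, a ≤ f x}.Nonempty := by
    by_contra hc
    rw [Set.not_nonempty_iff_eq_empty] at hc
    have h0 : essInf f μ = 0 := by
      rw [essInf, Filter.liminf_eq]
      rw [show {a : ℝ | ∀ᶠ x in MeasureTheory.ae μ, a ≤ f x} = ∅ from hc]
      exact Real.sSup_empty
    exact absurd h0 h.ne'
  obtain ⟨a, ha⟩ := hne
  exact ae_essInf_le ⟨a, Filter.eventually_map.2 ha⟩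

/-- Embedding of variable exponent Lebesgue spaces on a finite measure space: if
`ess inf (q - p) > 0` then `L^{q(·)} ⊆ L^{p(·)}` with the quantitative norm bound in terms of
`‖1‖_{L^{t'(·)}}` where `t = q/p` and `t'` is its conjugate exponent. -/
theorem Lq_subset_Lp_of_finite_measure {X : Type*} [MeasurableSpace X]
    (μ : Measure X) [IsFiniteMeasure μ]
    (p q : X → ℝ) (hpm : Measurable p) (hqm : Measurable q)
    (hp : 0 < essInf p μ) (hpb : ∃ C : ℝ, ∀ᵐ x ∂μ, p x ≤ C)
    (hq : 0 < essInf q μ) (hqb : ∃ C : ℝ, ∀ᵐ x ∂μ, q x ≤ C)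
    (hqp : ∃ ε : ℝ, 0 < ε ∧ ∀ᵐ x ∂μ, ε ≤ q x - p x)
    (u : X → ℝ) (hu : Measurable u)
    (humem : modE μ q (fun x => (‖u x‖₊ : ℝ≥0∞)) < ⊤) :
    modE μ p (fun x => (‖u x‖₊ : ℝ≥0∞)) < ⊤ ∧
    luxR μ p u ≤
      ENNReal.ofReal ((2 : ℝ) ^ (1 / essInf p μ)) *
        max ((luxR μ (fun x => (q x / p x) / (q x / p x - 1)) (fun _ => 1)) ^ (1 / essSup p μ))
            ((luxR μ (fun x => (q x / p x) / (q x / p x - 1)) (fun _ => 1)) ^ (1 / essInf p μ)) *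
        luxR μ q u := by
  classical
  obtain ⟨Cp, hCp⟩ := hpb
  obtain ⟨ε, hε, hqpae⟩ := hqp
  by_cases hμ : μ = 0
  · subst hμ
    constructor
    · simp [modE]
    · have hz : luxR (0 : Measure X) p u = 0 := by
        refine le_antisymm ?_ zero_le
        refine ENNReal.le_of_forall_pos_le_add fun δ hδ _ => ?_
        rw [zero_add]
        exact sInf_le ⟨by exact_mod_cast hδ, ENNReal.coe_ne_top, by simp [modE]⟩
      rw [hz]
      exact zero_le
  haveI : (MeasureTheory.ae μ).NeBot := ae_neBot.2 hμ
  set Pm := essInf p μ with hPmdef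
  set PM := essSup p μ with hPMdef
  set Qm := essInf q μ with hQmdef
  have hp_le : ∀ᵐ x ∂μ, Pm ≤ p x := ae_essInf_le_of_pos hp
  have hq_le : ∀ᵐ x ∂μ, Qm ≤ q x := ae_essInf_le_of_pos hq
  have hp_ub : ∀ᵐ x ∂μ, p x ≤ PM := ae_le_essSup ⟨Cp, Filter.eventually_map.2 hCp⟩
  have hPM_pos : 0 < PM := by
    obtain ⟨x, hx1, hx2⟩ := (hp_le.and hp_ub).exists
    exact lt_of_lt_of_le hp (hx1.trans hx2)
  set r : X → ℝ := fun x => q x / p x / (q x / p x - 1) with hrdef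
  set a : ℝ := 1 / PM with hadef
  set b : ℝ := 1 / Pm with hbdef
  have ha0 : 0 ≤ a := by positivity
  have hb0 : 0 < b := by positivity
  set c2 : ℝ≥0∞ := ENNReal.ofReal ((2:ℝ) ^ b) with hc2def
  have hc2_0 : 0 < c2 := ENNReal.ofReal_pos.2 (Real.rpow_pos_of_pos two_pos b)
  have hc2_t : c2 ≠ ⊤ := ENNReal.ofReal_ne_top
  have hae : ∀ᵐ x ∂μ, (q x / p x).HolderConjugate (r x) ∧ 0 < p x ∧ Pm ≤ p x ∧
      p x ≤ PM ∧ Qm ≤ q x := by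
    filter_upwards [hp_le, hp_ub, hq_le, hqpae] with x h1 h2 h3 h4
    have hpx : 0 < p x := lt_of_lt_of_le hp h1
    have ht : 1 < q x / p x := (one_lt_div hpx).2 (by linarith)
    exact ⟨Real.HolderConjugate.conjExponent ht, hpx, h1, h2, h3⟩
  set Sq : Set ℝ≥0∞ :=
    {l | 0 < l ∧ l ≠ ⊤ ∧ modE μ q (fun x => (‖u x‖₊ : ℝ≥0∞) / l) ≤ 1} with hSqdef
  set Sp : Set ℝ≥0∞ :=
    {l | 0 < l ∧ l ≠ ⊤ ∧ modE μ p (fun x => (‖u x‖₊ : ℝ≥0∞) / l) ≤ 1} with hSpdef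
  set T : Set ℝ≥0∞ :=
    {l | 0 < l ∧ l ≠ ⊤ ∧ modE μ r (fun x => (1:ℝ≥0∞) / l) ≤ 1} with hTdef
  have hLq : luxR μ q u = sInf Sq := rfl
  have hLp : luxR μ p u = sInf Sp := rfl
  have hLr : luxR μ r (fun _ => 1) = sInf T := by
    unfold luxR luxE
    congr 1
    ext l
    simp [modE, hTdef]
  have hUm : Measurable (fun x => (‖u x‖₊ : ℝ≥0∞)) := hu.nnnorm.coe_nnreal_ennreal
  -- an explicit admissible element for the constant function 1 and exponent r
  set m0 : ℝ≥0∞ := max 1 (μ Set.univ) with hm0def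
  have hm0_1 : (1:ℝ≥0∞) ≤ m0 := le_max_left _ _
  have hm0_t : m0 ≠ ⊤ := (max_lt one_lt_top (measure_lt_top μ _)).ne
  have hm0T : m0 ∈ T := by
    refine ⟨lt_of_lt_of_le zero_lt_one hm0_1, hm0_t, ?_⟩
    have hpt : ∀ᵐ x ∂μ, ((1:ℝ≥0∞) / m0) ^ r x ≤ m0⁻¹ := by
      filter_upwards [hae] with x hx
      rw [one_div]
      calc m0⁻¹ ^ r x ≤ m0⁻¹ ^ (1:ℝ) :=
            ENNReal.rpow_le_rpow_of_exponent_ge (ENNReal.inv_le_one.2 hm0_1)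
              hx.1.symm.lt.le
        _ = m0⁻¹ := ENNReal.rpow_one _
    calc modE μ r (fun x => (1:ℝ≥0∞)/m0) ≤ ∫⁻ _, m0⁻¹ ∂μ := lintegral_mono_ae hpt
      _ = m0⁻¹ * μ Set.univ := lintegral_const _
      _ ≤ m0⁻¹ * m0 := _root_.mul_le_mul_right (le_max_right _ _) _
      _ = 1 := ENNReal.inv_mul_cancel (zero_lt_one.trans_le hm0_1).ne' hm0_t
  -- an explicit admissible element for `u` and exponent `q`
  set I := modE μ q (fun x => (‖u x‖₊ : ℝ≥0∞)) with hIdef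
  have hIt : I ≠ ⊤ := humem.ne
  set lam0 : ℝ≥0∞ := max 1 (I ^ (1 / Qm)) with hlam0def
  have hlam0_1 : (1:ℝ≥0∞) ≤ lam0 := le_max_left _ _
  have hlam0_t : lam0 ≠ ⊤ :=
    (max_lt one_lt_top (ENNReal.rpow_lt_top_of_nonneg (by positivity) hIt)).ne
  have hlam0q : I ≤ lam0 ^ Qm := by
    calc I = (I ^ (1/Qm)) ^ Qm := by
          rw [← ENNReal.rpow_mul, one_div, inv_mul_cancel₀ hq.ne', ENNReal.rpow_one]
      _ ≤ lam0 ^ Qm := ENNReal.rpow_le_rpow (le_max_right _ _) hq.le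
  have hlam0Sq : lam0 ∈ Sq := by
    refine ⟨zero_lt_one.trans_le hlam0_1, hlam0_t, ?_⟩
    have hc : lam0 ^ Qm ≠ 0 := (ENNReal.rpow_pos (zero_lt_one.trans_le hlam0_1) hlam0_t).ne'
    have hpt : ∀ᵐ x ∂μ, ((‖u x‖₊:ℝ≥0∞)/lam0) ^ q x ≤ (‖u x‖₊:ℝ≥0∞) ^ q x / lam0 ^ Qm := by
      filter_upwards [hae] with x hx
      have hq0 : (0:ℝ) ≤ q x := le_trans hq.le hx.2.2.2.2
      rw [ENNReal.div_rpow_of_nonneg _ _ hq0]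
      exact ENNReal.div_le_div le_rfl
        (ENNReal.rpow_le_rpow_of_exponent_le hlam0_1 hx.2.2.2.2)
    have hIeq : (∫⁻ x, (‖u x‖₊:ℝ≥0∞) ^ q x ∂μ) = I := rfl
    calc modE μ q (fun x => (‖u x‖₊:ℝ≥0∞) / lam0)
        ≤ ∫⁻ x, (‖u x‖₊:ℝ≥0∞) ^ q x / lam0 ^ Qm ∂μ := lintegral_mono_ae hpt
      _ = I / lam0 ^ Qm := by
          simp_rw [div_eq_mul_inv]
          rw [lintegral_mul_const' _ _ (ENNReal.inv_ne_top.2 hc), hIeq]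
      _ ≤ 1 := ENNReal.div_le_of_le_mul (by rwa [one_mul])
  -- the key modular estimate via Young's inequality
  have key : ∀ lam ∈ Sq, ∀ m ∈ T,
      (∫⁻ x, ((‖u x‖₊ : ℝ≥0∞) / lam) ^ p x ∂μ) ≤ 2 * m := by
    intro lam hlam m hmT
    obtain ⟨hl0, hlt, hlmod⟩ := hlam
    obtain ⟨hm0, hmt, hmmod⟩ := hmT
    have hGm : Measurable fun x => ((‖u x‖₊ : ℝ≥0∞) / lam) ^ q x :=
      (hUm.div measurable_const).pow hqm
    have hpt : ∀ᵐ x ∂μ, ((‖u x‖₊ : ℝ≥0∞) / lam) ^ p x * m⁻¹ ≤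
        ((‖u x‖₊ : ℝ≥0∞) / lam) ^ q x + ((1:ℝ≥0∞)/m) ^ r x := by
      filter_upwards [hae] with x hx
      obtain ⟨hconj, hpx, -, -, -⟩ := hx
      have h1 := ENNReal.young_inequality (((‖u x‖₊ : ℝ≥0∞) / lam) ^ p x) m⁻¹ hconj
      have h2 : (((‖u x‖₊ : ℝ≥0∞) / lam) ^ p x) ^ (q x / p x)
          = ((‖u x‖₊ : ℝ≥0∞) / lam) ^ q x := by
        rw [← ENNReal.rpow_mul]
        congr 1
        field_simp
      refine h1.trans ?_
      rw [h2, one_div]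
      exact add_le_add
        (ENNReal.div_le_of_le_mul' (le_mul_of_one_le_left zero_le
          (ENNReal.one_le_ofReal.2 hconj.lt.le)))
        (ENNReal.div_le_of_le_mul' (le_mul_of_one_le_left zero_le
          (ENNReal.one_le_ofReal.2 hconj.symm.lt.le)))
    have hint : (∫⁻ x, ((‖u x‖₊ : ℝ≥0∞) / lam) ^ p x ∂μ) * m⁻¹ ≤ 2 := by
      rw [← lintegral_mul_const' m⁻¹ _ (ENNReal.inv_ne_top.2 hm0.ne')]
      calc ∫⁻ x, ((‖u x‖₊:ℝ≥0∞)/lam) ^ p x * m⁻¹ ∂μ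
          ≤ ∫⁻ x, (((‖u x‖₊:ℝ≥0∞)/lam) ^ q x + ((1:ℝ≥0∞)/m) ^ r x) ∂μ :=
            lintegral_mono_ae hpt
        _ = (∫⁻ x, ((‖u x‖₊:ℝ≥0∞)/lam) ^ q x ∂μ) + ∫⁻ x, ((1:ℝ≥0∞)/m) ^ r x ∂μ :=
            lintegral_add_left hGm _
        _ ≤ 1 + 1 := add_le_add hlmod hmmod
        _ = 2 := one_add_one_eq_two
    calc (∫⁻ x, ((‖u x‖₊:ℝ≥0∞)/lam) ^ p x ∂μ)
        = (∫⁻ x, ((‖u x‖₊:ℝ≥0∞)/lam) ^ p x ∂μ) * m⁻¹ * m := by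
          rw [mul_assoc, ENNReal.inv_mul_cancel hm0.ne' hmt, mul_one]
      _ ≤ 2 * m := _root_.mul_le_mul_left hint m
  -- finiteness of the p-modular
  have hfin : modE μ p (fun x => (‖u x‖₊ : ℝ≥0∞)) < ⊤ := by
    have hkey := key lam0 hlam0Sq m0 hm0T
    have hC0t : lam0 ^ PM ≠ ⊤ := ENNReal.rpow_ne_top_of_nonneg hPM_pos.le hlam0_t
    have hpt : ∀ᵐ x ∂μ, (‖u x‖₊ : ℝ≥0∞) ^ p x ≤ ((‖u x‖₊:ℝ≥0∞)/lam0) ^ p x * lam0 ^ PM := by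
      filter_upwards [hae] with x hx
      obtain ⟨-, hpx, h1, h2, -⟩ := hx
      have hlp0 : lam0 ^ p x ≠ 0 := (ENNReal.rpow_pos (zero_lt_one.trans_le hlam0_1) hlam0_t).ne'
      have hlpt : lam0 ^ p x ≠ ⊤ := ENNReal.rpow_ne_top_of_nonneg hpx.le hlam0_t
      have heq : (‖u x‖₊ : ℝ≥0∞) ^ p x = ((‖u x‖₊:ℝ≥0∞)/lam0) ^ p x * lam0 ^ p x := by
        rw [ENNReal.div_rpow_of_nonneg _ _ hpx.le, ENNReal.div_mul_cancel hlp0 hlpt]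
      rw [heq]
      exact _root_.mul_le_mul_right (ENNReal.rpow_le_rpow_of_exponent_le hlam0_1 h2) _
    calc modE μ p (fun x => (‖u x‖₊:ℝ≥0∞))
        ≤ ∫⁻ x, ((‖u x‖₊:ℝ≥0∞)/lam0) ^ p x * lam0 ^ PM ∂μ := lintegral_mono_ae hpt
      _ = (∫⁻ x, ((‖u x‖₊:ℝ≥0∞)/lam0) ^ p x ∂μ) * lam0 ^ PM :=
          lintegral_mul_const' _ _ hC0t
      _ ≤ 2 * m0 * lam0 ^ PM := _root_.mul_le_mul_left hkey _
      _ < ⊤ := (ENNReal.mul_ne_top (ENNReal.mul_ne_top (by norm_num) hm0_t) hC0t).lt_top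
  -- the main norm estimate, for each admissible `lam` and `m`
  have main : ∀ lam ∈ Sq, ∀ m ∈ T,
      sInf Sp ≤ lam * (c2 * max (m ^ a) (m ^ b)) := by
    intro lam hlam m hmT
    have hl0 := hlam.1
    have hlt := hlam.2.1
    have hm0 := hmT.1
    have hmt := hmT.2.1
    set B : ℝ≥0∞ := c2 * max (m ^ a) (m ^ b) with hBdef
    have hmaxt : max (m ^ a) (m ^ b) ≠ ⊤ :=
      (max_lt (ENNReal.rpow_lt_top_of_nonneg ha0 hmt)
        (ENNReal.rpow_lt_top_of_nonneg hb0.le hmt)).ne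
    have hmax0 : max (m ^ a) (m ^ b) ≠ 0 :=
      (lt_of_lt_of_le (ENNReal.rpow_pos hm0 hmt) (le_max_left _ _)).ne'
    have hB0 : B ≠ 0 := mul_ne_zero hc2_0.ne' hmax0
    have hBt : B ≠ ⊤ := ENNReal.mul_ne_top hc2_t hmaxt
    have h2m0 : (2 : ℝ≥0∞) * m ≠ 0 := mul_ne_zero (by norm_num) hm0.ne'
    have h2mt : (2 : ℝ≥0∞) * m ≠ ⊤ := ENNReal.mul_ne_top (by norm_num) hmt
    have hBp : ∀ᵐ x ∂μ, 2 * m ≤ B ^ p x := by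
      filter_upwards [hae] with x hx
      obtain ⟨-, hpx, h1, h2, -⟩ := hx
      have hbp1 : (1:ℝ) ≤ b * p x := by
        have hx1 : (1:ℝ) ≤ p x / Pm := (one_le_div hp).2 h1
        calc (1:ℝ) ≤ p x / Pm := hx1
          _ = b * p x := by rw [hbdef]; ring
      have hc2p : (2:ℝ≥0∞) ≤ c2 ^ p x := by
        rw [hc2def, ENNReal.ofReal_rpow_of_pos (Real.rpow_pos_of_pos two_pos b),
          ← Real.rpow_mul (by norm_num : (0:ℝ) ≤ 2)]
        calc (2:ℝ≥0∞) = ENNReal.ofReal ((2:ℝ) ^ (1:ℝ)) := by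
              rw [Real.rpow_one]; norm_num
          _ ≤ ENNReal.ofReal ((2:ℝ) ^ (b * p x)) :=
              ENNReal.ofReal_le_ofReal
                (Real.rpow_le_rpow_of_exponent_le one_le_two hbp1)
      have hmaxp : m ≤ (max (m ^ a) (m ^ b)) ^ p x := by
        rcases le_total m 1 with hm1 | hm1
        · have hap : a * p x ≤ 1 := by
            have hx2 : p x / PM ≤ 1 := (div_le_one hPM_pos).2 h2
            calc a * p x = p x / PM := by rw [hadef]; ring
              _ ≤ 1 := hx2
          calc m = m ^ (1:ℝ) := (ENNReal.rpow_one m).symm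
            _ ≤ m ^ (a * p x) := ENNReal.rpow_le_rpow_of_exponent_ge hm1 hap
            _ = (m ^ a) ^ p x := ENNReal.rpow_mul m a (p x)
            _ ≤ (max (m ^ a) (m ^ b)) ^ p x :=
                ENNReal.rpow_le_rpow (le_max_left _ _) hpx.le
        · calc m = m ^ (1:ℝ) := (ENNReal.rpow_one m).symm
            _ ≤ m ^ (b * p x) := ENNReal.rpow_le_rpow_of_exponent_le hm1 hbp1
            _ = (m ^ b) ^ p x := ENNReal.rpow_mul m b (p x)
            _ ≤ (max (m ^ a) (m ^ b)) ^ p x :=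
                ENNReal.rpow_le_rpow (le_max_right _ _) hpx.le
      calc 2 * m ≤ c2 ^ p x * (max (m ^ a) (m ^ b)) ^ p x := mul_le_mul' hc2p hmaxp
        _ = B ^ p x := (ENNReal.mul_rpow_of_nonneg _ _ hpx.le).symm
    have hmemSp : lam * B ∈ Sp := by
      refine ⟨ENNReal.mul_pos hl0.ne' hB0, ENNReal.mul_ne_top hlt hBt, ?_⟩
      have hpt : ∀ᵐ x ∂μ, ((‖u x‖₊:ℝ≥0∞) / (lam * B)) ^ p x ≤
          ((‖u x‖₊:ℝ≥0∞)/lam) ^ p x / (2 * m) := by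
        filter_upwards [hae, hBp] with x hx hBpx
        obtain ⟨-, hpx, -, -, -⟩ := hx
        have hsplit : (‖u x‖₊:ℝ≥0∞) / (lam * B) = ((‖u x‖₊:ℝ≥0∞)/lam) / B := by
          rw [div_eq_mul_inv, div_eq_mul_inv, div_eq_mul_inv,
            ENNReal.mul_inv (Or.inl hl0.ne') (Or.inl hlt), mul_assoc]
        rw [hsplit, ENNReal.div_rpow_of_nonneg _ _ hpx.le]
        exact ENNReal.div_le_div le_rfl hBpx
      calc modE μ p (fun x => (‖u x‖₊:ℝ≥0∞) / (lam * B))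
          ≤ ∫⁻ x, ((‖u x‖₊:ℝ≥0∞)/lam) ^ p x / (2*m) ∂μ := lintegral_mono_ae hpt
        _ = (∫⁻ x, ((‖u x‖₊:ℝ≥0∞)/lam) ^ p x ∂μ) / (2*m) := by
            simp_rw [div_eq_mul_inv]
            exact lintegral_mul_const' _ _ (ENNReal.inv_ne_top.2 h2m0)
        _ ≤ (2*m) / (2*m) := ENNReal.div_le_div (key lam hlam m hmT) le_rfl
        _ = 1 := ENNReal.div_self h2m0 h2mt
    exact sInf_le hmemSp
  have hK_t : sInf Sq ≠ ⊤ := (lt_of_le_of_lt (sInf_le hlam0Sq) hlam0_t.lt_top).ne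
  -- take the infimum over `lam`
  have step6 : ∀ m ∈ T, sInf Sp ≤ c2 * max (m ^ a) (m ^ b) * sInf Sq := by
    intro m hmT
    have hm0 := hmT.1
    have hmt := hmT.2.1
    have hmaxt : max (m ^ a) (m ^ b) ≠ ⊤ :=
      (max_lt (ENNReal.rpow_lt_top_of_nonneg ha0 hmt)
        (ENNReal.rpow_lt_top_of_nonneg hb0.le hmt)).ne
    have hmax0 : max (m ^ a) (m ^ b) ≠ 0 :=
      (lt_of_lt_of_le (ENNReal.rpow_pos hm0 hmt) (le_max_left _ _)).ne'
    have hB0 : c2 * max (m ^ a) (m ^ b) ≠ 0 := mul_ne_zero hc2_0.ne' hmax0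
    have hBt : c2 * max (m ^ a) (m ^ b) ≠ ⊤ := ENNReal.mul_ne_top hc2_t hmaxt
    have hdiv : sInf Sp / (c2 * max (m ^ a) (m ^ b)) ≤ sInf Sq := by
      refine le_sInf fun lam hlam => ENNReal.div_le_of_le_mul' ?_
      rw [mul_comm]
      exact main lam hlam m hmT
    have := (ENNReal.div_le_iff_le_mul (Or.inl hB0) (Or.inl hBt)).1 hdiv
    rwa [mul_comm] at this
  -- pass to the infimum over `m` by approximation from above
  set M := sInf T with hMdef
  have hMt : M ≠ ⊤ := (lt_of_le_of_lt (sInf_le hm0T) hm0_t.lt_top).ne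
  have hTseq : ∀ n : ℕ, M + ((n:ℝ≥0∞)+1)⁻¹ ∈ T := by
    intro n
    have hδ0 : ((n:ℝ≥0∞)+1)⁻¹ ≠ 0 := ENNReal.inv_ne_zero.2 (by simp)
    have hδt : ((n:ℝ≥0∞)+1)⁻¹ ≠ ⊤ := ENNReal.inv_ne_top.2 (lt_of_lt_of_le zero_lt_one le_add_self).ne'
    have hlt : M < M + ((n:ℝ≥0∞)+1)⁻¹ := ENNReal.lt_add_right hMt hδ0
    obtain ⟨m', hm'T, hm'lt⟩ := sInf_lt_iff.1 hlt
    refine ⟨lt_of_lt_of_le hm'T.1 hm'lt.le, ENNReal.add_ne_top.2 ⟨hMt, hδt⟩, ?_⟩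
    refine le_trans (lintegral_mono_ae ?_) hm'T.2.2
    filter_upwards [hae] with x hx
    exact ENNReal.rpow_le_rpow (ENNReal.div_le_div le_rfl hm'lt.le) (zero_le_one.trans hx.1.symm.lt.le)
  have htend : Filter.Tendsto (fun n : ℕ => M + ((n:ℝ≥0∞)+1)⁻¹)
      Filter.atTop (nhds M) := by
    have h1 : Filter.Tendsto (fun n : ℕ => ((n:ℝ≥0∞)+1)⁻¹) Filter.atTop (nhds 0) := by
      have h2 := ENNReal.tendsto_inv_nat_nhds_zero.comp (Filter.tendsto_add_atTop_nat 1)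
      have h3 : (fun n : ℕ => ((n:ℝ≥0∞)+1)⁻¹)
          = (fun n : ℕ => ((n:ℝ≥0∞))⁻¹) ∘ (fun n : ℕ => n + 1) := by
        funext n
        simp only [Function.comp_apply]
        push_cast
        ring_nf
      rw [h3]
      exact h2
    simpa using Filter.Tendsto.const_add M h1
  have hφ : Filter.Tendsto
      (fun n : ℕ => c2 * max ((M + ((n:ℝ≥0∞)+1)⁻¹) ^ a) ((M + ((n:ℝ≥0∞)+1)⁻¹) ^ b) * sInf Sq)
      Filter.atTop (nhds (c2 * max (M ^ a) (M ^ b) * sInf Sq)) :=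
    ENNReal.Tendsto.mul_const
      (ENNReal.Tendsto.const_mul ((htend.ennrpow_const a).max (htend.ennrpow_const b))
        (Or.inr hc2_t)) (Or.inr hK_t)
  have hfinal : sInf Sp ≤ c2 * max (M ^ a) (M ^ b) * sInf Sq :=
    ge_of_tendsto hφ (Filter.Eventually.of_forall fun n => step6 _ (hTseq n))
  refine ⟨hfin, ?_⟩
  rw [hLp, hLq, hLr]
  exact hfinal

end
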